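/- Let α', β' ∈ ℂ and let τ : ℤ → ℂ be a Somos 5 sequence with coefficients α', β' such that τ_n ≠ 0 for all n ∈ ℤ. Then the sequence f_n = τ_{n+1} τ_{n-1} / (τ_n)^2 satisfies the third order nonlinear mapping f_{n-1} (f_n)^2 (f_{n+1})^2 f_{n+2} = α' f_n f_{n+1} + β' for all n ∈ ℤ. -/

import Mathlib

/-- For a nonvanishing Somos 5 sequence `τ` with coefficients `α', β'`,
the quantity `f_n = τ_{n+1} τ_{n-1} / τ_n ^ 2` satisfies the third order map
`f_{n-1} f_n^2 f_{n+1}^2 f_{n+2} = α' f_n f_{n+1} + β'`. -/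
theorem somos5_to_third_order_map (α' β' : ℂ) (τ : ℤ → ℂ)
    (hτ : ∀ n : ℤ, τ (n + 3) * τ (n - 2) = α' * (τ (n + 2) * τ (n - 1)) + β' * (τ (n + 1) * τ n))
    (hne : ∀ n : ℤ, τ n ≠ 0)
    (f : ℤ → ℂ) (hf : ∀ n : ℤ, f n = τ (n + 1) * τ (n - 1) / (τ n) ^ 2) :
    ∀ n : ℤ, f (n - 1) * (f n) ^ 2 * (f (n + 1)) ^ 2 * f (n + 2) = α' * (f n * f (n + 1)) + β' := by
  intro n
  have h := hτ n
  rw [hf (n-1), hf n, hf (n+1), hf (n+2)]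
  have e1 : n - 1 + 1 = n := by ring
  have e2 : n - 1 - 1 = n - 2 := by ring
  have e3 : n + 1 + 1 = n + 2 := by ring
  have e4 : n + 1 - 1 = n := by ring
  have e5 : n + 2 + 1 = n + 3 := by ring
  have e6 : n + 2 - 1 = n + 1 := by ring
  rw [e1, e2, e3, e4, e5, e6]
  have h1 := hne (n - 2)
  have h2 := hne (n - 1)
  have h3 := hne n
  have h4 := hne (n + 1)
  have h5 := hne (n + 2)
  have h6 := hne (n + 3)
  field_simp
  linear_combination h
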